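/- Let Y_1^(n),...,Y_N^(n) be, for each n, independent random variables with E[Y_i^(n)] = μ + b_i^(n) where b_i^(n) → 0 as n → ∞, and with variances Var(Y_i^(n)) = σ_i² fixed and finite. Let fixed weights w_i ∈ [0,1/2) sum to 1, define μ̂^(n) = Σ w_i Y_i^(n), h_i = w_i²/(1−2w_i), and V̂^(n) = Σ_i [h_i/(1+Σh_ℓ)](Y_i^(n) − μ̂^(n))². Then E[V̂^(n)] → Σ_i w_i² σ_i² = lim_n Var(μ̂^(n)) as n → ∞. -/

import Mathlib

open MeasureTheory ProbabilityTheory Finset Filter Topology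

lemma dive_var_lin {Ω : Type*} [MeasureSpace Ω] [IsProbabilityMeasure (ℙ : Measure Ω)]
    {N : ℕ} (X : Fin N → Ω → ℝ) (σ2 : Fin N → ℝ)
    (hindep : iIndepFun X ℙ)
    (hL2 : ∀ i, MemLp (X i) 2 ℙ)
    (hvar : ∀ i, variance (X i) ℙ = σ2 i)
    (c : Fin N → ℝ) :
    variance (fun ω => ∑ l, c l * X l ω) ℙ = ∑ l, (c l) ^ 2 * σ2 l := by
  have hXc : ∀ l : Fin N, MemLp (fun ω => c l * X l ω) 2 ℙ := fun l => (hL2 l).const_mul _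
  have heq : (fun ω => ∑ l, c l * X l ω) = ∑ l : Fin N, (fun ω => c l * X l ω) := by
    funext ω; simp
  rw [heq, IndepFun.variance_sum (fun l _ => hXc l)]
  · exact Finset.sum_congr rfl fun l _ => by rw [variance_const_mul, hvar]
  · intro i hi j hj hij
    exact (hindep.indepFun hij).comp (measurable_const_mul _) (measurable_const_mul _)

lemma dive_mean_lin {Ω : Type*} [MeasureSpace Ω] [IsProbabilityMeasure (ℙ : Measure Ω)]
    {N : ℕ} (X : Fin N → Ω → ℝ)
    (hL2 : ∀ i, MemLp (X i) 2 ℙ) (c : Fin N → ℝ) :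
    ∫ ω, ∑ l, c l * X l ω ∂ℙ = ∑ l, c l * ∫ ω, X l ω ∂ℙ := by
  rw [integral_finset_sum _ fun l _ => ((hL2 l).integrable one_le_two).const_mul _]
  exact Finset.sum_congr rfl fun l _ => integral_const_mul _ _

theorem dive_asymptotic_unbiasedness
    {Ω : Type*} [MeasureSpace Ω] [IsProbabilityMeasure (ℙ : Measure Ω)]
    {N : ℕ} (Y : ℕ → Fin N → Ω → ℝ) (μ : ℝ) (b : ℕ → Fin N → ℝ) (σ2 : Fin N → ℝ)
    (w : Fin N → ℝ)
    (hindep : ∀ n, iIndepFun (Y n) ℙ)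
    (hmeas : ∀ n i, Measurable (Y n i))
    (hL2 : ∀ n i, MemLp (Y n i) 2 ℙ)
    (hmean : ∀ n i, ∫ ω, Y n i ω ∂ℙ = μ + b n i)
    (hb : ∀ i, Tendsto (fun n => b n i) atTop (𝓝 0))
    (hvar : ∀ n i, variance (Y n i) ℙ = σ2 i)
    (hw : ∀ i, 0 ≤ w i) (hwlt : ∀ i, w i < 1 / 2) (hsum : ∑ i, w i = 1)
    (h : Fin N → ℝ) (hh : ∀ i, h i = (w i) ^ 2 / (1 - 2 * w i)) :
    Tendsto (fun n => ∫ ω, ∑ i, (h i / (1 + ∑ l, h l)) *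
          (Y n i ω - ∑ l, w l * Y n l ω) ^ 2 ∂ℙ) atTop
        (𝓝 (∑ i, (w i) ^ 2 * σ2 i))
      ∧ Tendsto (fun n => variance (fun ω => ∑ l, w l * Y n l ω) ℙ) atTop
        (𝓝 (∑ i, (w i) ^ 2 * σ2 i)) := by
  classical
  -- basic positivity facts
  have hden : ∀ i, (0:ℝ) < 1 - 2 * w i := fun i => by
    have := hwlt i; linarith
  have hhnn : ∀ i, 0 ≤ h i := fun i => by
    rw [hh i]; exact div_nonneg (sq_nonneg _) (hden i).le
  set H : ℝ := ∑ l, h l with hH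
  have hHnn : 0 ≤ H := Finset.sum_nonneg fun l _ => hhnn l
  have hHpos : (0:ℝ) < 1 + H := by linarith
  set S : ℝ := ∑ i, (w i) ^ 2 * σ2 i with hS
  -- coefficients for Y n i - μ̂
  set c : Fin N → Fin N → ℝ := fun i l => (if l = i then (1:ℝ) else 0) - w l with hc
  have hZrep : ∀ n i ω, Y n i ω - ∑ l, w l * Y n l ω = ∑ l, c i l * Y n l ω := by
    intro n i ω
    simp [hc, sub_mul, Finset.sum_sub_distrib, Finset.sum_ite_eq, ite_mul]
  have hZL2 : ∀ n i, MemLp (fun ω => ∑ l, c i l * Y n l ω) 2 ℙ := by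
    intro n i
    have : (fun ω => ∑ l, c i l * Y n l ω) = ∑ l : Fin N, (fun ω => c i l * Y n l ω) := by
      funext ω; simp
    rw [this]
    exact memLp_finset_sum' _ fun l _ => (hL2 n l).const_mul _
  -- variance of Z i
  have hZvar : ∀ n i, variance (fun ω => ∑ l, c i l * Y n l ω) ℙ
      = (1 - 2 * w i) * σ2 i + S := by
    intro n i
    rw [dive_var_lin (Y n) σ2 (hindep n) (hL2 n) (hvar n)]
    have expand : ∀ l : Fin N, (c i l) ^ 2 * σ2 l
        = ((if l = i then (1:ℝ) else 0) * σ2 l - 2 * ((if l = i then (1:ℝ) else 0) * (w l * σ2 l)))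
          + (w l) ^ 2 * σ2 l := by
      intro l; simp only [hc]; split <;> ring
    rw [Finset.sum_congr rfl fun l _ => expand l, Finset.sum_add_distrib,
      Finset.sum_sub_distrib]
    simp [Finset.sum_ite_eq, hS]
    ring
  -- mean of Z i
  have hZmean : ∀ n i, ∫ ω, ∑ l, c i l * Y n l ω ∂ℙ = b n i - ∑ l, w l * b n l := by
    intro n i
    rw [dive_mean_lin (Y n) (hL2 n)]
    have : ∀ l : Fin N, c i l * ∫ ω, Y n l ω ∂ℙ
        = ((if l = i then (1:ℝ) else 0) * (μ + b n l)) - (w l * μ + w l * b n l) := by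
      intro l; rw [hmean n l]; simp only [hc]; ring
    rw [Finset.sum_congr rfl fun l _ => this l, Finset.sum_sub_distrib,
      Finset.sum_add_distrib, ← Finset.sum_mul, hsum]
    simp [Finset.sum_ite_eq]
  -- second moment of Z i
  have hZ2 : ∀ n i, ∫ ω, (Y n i ω - ∑ l, w l * Y n l ω) ^ 2 ∂ℙ
      = ((1 - 2 * w i) * σ2 i + S) + (b n i - ∑ l, w l * b n l) ^ 2 := by
    intro n i
    simp only [hZrep]
    have hv := variance_eq_sub (hZL2 n i)
    have : ∫ ω, (∑ l, c i l * Y n l ω) ^ 2 ∂ℙ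
        = variance (fun ω => ∑ l, c i l * Y n l ω) ℙ
          + (∫ ω, ∑ l, c i l * Y n l ω ∂ℙ) ^ 2 := by
      rw [hv]; simp only [Pi.pow_apply]; ring
    rw [this, hZvar, hZmean]
  -- expectation of the estimator
  have hEV : ∀ n, ∫ ω, ∑ i, (h i / (1 + ∑ l, h l)) *
          (Y n i ω - ∑ l, w l * Y n l ω) ^ 2 ∂ℙ
      = S + ∑ i, (h i / (1 + H)) * (b n i - ∑ l, w l * b n l) ^ 2 := by
    intro n
    rw [integral_finset_sum _ (fun i _ => by
      simp only [hZrep]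
      exact ((hZL2 n i).integrable_sq).const_mul (h i / (1 + H)))]
    have step : ∀ i : Fin N, ∫ ω, (h i / (1 + H)) * (Y n i ω - ∑ l, w l * Y n l ω) ^ 2 ∂ℙ
        = (h i / (1 + H)) * (((1 - 2 * w i) * σ2 i + S) + (b n i - ∑ l, w l * b n l) ^ 2) := by
      intro i
      rw [integral_const_mul, hZ2 n i]
    rw [Finset.sum_congr rfl fun i _ => step i]
    have hkey : ∑ i, (h i / (1 + H)) * ((1 - 2 * w i) * σ2 i + S) = S := by
      have hterm : ∀ i : Fin N, (h i / (1 + H)) * ((1 - 2 * w i) * σ2 i + S)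
          = ((w i) ^ 2 * σ2 i + h i * S) / (1 + H) := by
        intro i
        have hwi : h i * (1 - 2 * w i) = (w i) ^ 2 := by
          rw [hh i, div_mul_cancel₀ _ (hden i).ne']
        have hnum : h i * ((1 - 2 * w i) * σ2 i + S) = (w i) ^ 2 * σ2 i + h i * S := by
          rw [mul_add, ← mul_assoc, hwi]
        rw [div_mul_eq_mul_div, hnum]
      rw [Finset.sum_congr rfl fun i _ => hterm i, ← Finset.sum_div,
        Finset.sum_add_distrib, ← Finset.sum_mul, ← hS, ← hH]
      field_simp
    have split : ∀ i : Fin N, h i / (1 + H) * (((1 - 2 * w i) * σ2 i + S)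
        + (b n i - ∑ l, w l * b n l) ^ 2)
        = h i / (1 + H) * ((1 - 2 * w i) * σ2 i + S)
          + h i / (1 + H) * (b n i - ∑ l, w l * b n l) ^ 2 := fun i => mul_add _ _ _
    rw [Finset.sum_congr rfl fun i _ => split i, Finset.sum_add_distrib, hkey]
  constructor
  · have hfun : (fun n => ∫ ω, ∑ i, (h i / (1 + ∑ l, h l)) *
          (Y n i ω - ∑ l, w l * Y n l ω) ^ 2 ∂ℙ)
        = fun n => S + ∑ i, (h i / (1 + H)) * (b n i - ∑ l, w l * b n l) ^ 2 := by
      funext n; exact hEV n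
    rw [hfun]
    have hrem : Tendsto (fun n => ∑ i, (h i / (1 + H)) * (b n i - ∑ l, w l * b n l) ^ 2)
        atTop (𝓝 0) := by
      have : Tendsto (fun n => ∑ i, (h i / (1 + H)) * (b n i - ∑ l, w l * b n l) ^ 2)
          atTop (𝓝 (∑ i : Fin N, (h i / (1 + H)) * ((0:ℝ) - ∑ l : Fin N, w l * 0) ^ 2)) := by
        apply tendsto_finset_sum
        intro i _
        apply Tendsto.const_mul
        exact (((hb i).sub (tendsto_finset_sum _ fun l _ => (hb l).const_mul (w l))).pow 2)
      simpa using this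
    have := (tendsto_const_nhds (x := S) (f := atTop)).add hrem
    simpa using this
  · have hconst : ∀ n, variance (fun ω => ∑ l, w l * Y n l ω) ℙ = ∑ i, (w i) ^ 2 * σ2 i :=
      fun n => dive_var_lin (Y n) σ2 (hindep n) (hL2 n) (hvar n) w
    simp only [hconst]
    exact tendsto_const_nhds
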